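/- Let m ≥ 2 and α ≥ 1 be integers, and let s be an integer with gcd(m, s) = 1. For each integer a with 0 ≤ a < m^{α+1}, define π₂(a) = m·(a mod m^α) + ⌊a / m^α⌋ (the cyclic rotation of the base-m digit string of a: if a = Σ_{i=0}^{α} m^i a_i with 0 ≤ a_i < m, then π₂(a) = a_α + Σ_{i=0}^{α−1} m^{i+1} a_i). Then the map from Z_{m^{α+1}} to Z_{m^{α+1}} × Z_{m^{α+1}} given by a ↦ (m·a mod m^{α+1}, s·m^α·π₂(a) mod m^{α+1}) is injective. -/

import Mathlib

/-- **Injectivity of the modified decoding map for `N₃(m₁,m₂)`.**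
Let `m ≥ 2`, `α ≥ 1`, `gcd(m,s) = 1`, and for `0 ≤ a < m^{α+1}` let
`π₂(a) = m·(a mod m^α) + ⌊a/m^α⌋` (cyclic rotation of the base-`m` digits of `a`).
Then `a ↦ (m·a mod m^{α+1}, s·m^α·π₂(a) mod m^{α+1})` is injective on `{0,…,m^{α+1}-1}`. -/
theorem rotation_decoding_injective
    (m a_exp s : ℕ) (hm : 2 ≤ m) (hα : 1 ≤ a_exp) (hs : Nat.gcd m s = 1) :
    ∀ a b : ℕ, a < m ^ (a_exp + 1) → b < m ^ (a_exp + 1) →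
      (m * a) % m ^ (a_exp + 1) = (m * b) % m ^ (a_exp + 1) →
      (s * m ^ a_exp * (m * (a % m ^ a_exp) + a / m ^ a_exp)) % m ^ (a_exp + 1) =
        (s * m ^ a_exp * (m * (b % m ^ a_exp) + b / m ^ a_exp)) % m ^ (a_exp + 1) →
      a = b := by
  intro a b ha hb h1 h2
  have hm0 : 0 < m := by omega
  set M := m ^ a_exp with hMdef
  have hM0 : 0 < M := Nat.pow_pos hm0
  have hpow : m ^ (a_exp + 1) = m * M := by rw [hMdef, pow_succ, Nat.mul_comm]
  -- Step 1: a % M = b % M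
  have hr : a % M = b % M := by
    have := h1
    rw [hpow, Nat.mul_mod_mul_left, Nat.mul_mod_mul_left] at this
    exact Nat.eq_of_mul_eq_mul_left hm0 this
  -- Step 2: reduce h2 to s * (a/M) ≡ s * (b/M) [MOD m]
  have key : ∀ x : ℕ, (s * M * (m * (x % M) + x / M)) % (m * M)
      = M * ((s * (x / M)) % m) := by
    intro x
    have : s * M * (m * (x % M) + x / M)
        = (m * M) * (s * (x % M)) + M * (s * (x / M)) := by ring
    rw [this, Nat.mul_add_mod, Nat.mul_comm m M, Nat.mul_mod_mul_left]
  rw [hpow, key a, key b] at h2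
  have hq' : (s * (a / M)) % m = (s * (b / M)) % m :=
    Nat.eq_of_mul_eq_mul_left hM0 h2
  have hmod : a / M ≡ b / M [MOD m] := by
    have : s * (a / M) ≡ s * (b / M) [MOD m] := hq'
    exact this.cancel_left_of_coprime hs
  have hqa : a / M < m := Nat.div_lt_of_lt_mul (by rwa [Nat.mul_comm, ← hpow])
  have hqb : b / M < m := Nat.div_lt_of_lt_mul (by rwa [Nat.mul_comm, ← hpow])
  have hq : a / M = b / M := by
    have := hmod
    unfold Nat.ModEq at this
    rwa [Nat.mod_eq_of_lt hqa, Nat.mod_eq_of_lt hqb] at this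
  calc a = M * (a / M) + a % M := (Nat.div_add_mod a M).symm
    _ = M * (b / M) + b % M := by rw [hq, hr]
    _ = b := Nat.div_add_mod b M
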